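/- Let Φ ∈ ℝ^{np×n} be (n-stacked) q-error detectable, let x ∈ ℝⁿ, e ∈ Σ_qⁿ, and v ∈ ℝ^{np} with ‖v_i‖₂ ≤ v_max for every block i ∈ {1,…,p}, and let ẑ = Φx + v + e, x̂ = Φ†ẑ, r = ẑ − Φx̂. If ‖r_i‖₂ ≤ √p · v_max for all i ∈ {1,…,p}, then ‖e_i‖₂ ≤ κ^e_{p,q}(Φ) · v_max for all i ∈ {1,…,p}, and moreover ‖x̂ − x‖₂ ≤ κ^d_{p,q}(Φ) · v_max, where κ^d_{p,q}(Φ) := (√p + 1)√(p−q)/ρ_{p,q}(Φ) and κ^e_{p,q}(Φ) := (η_{p,q}(Φ)√(p−q) + 1)(√p + 1). -/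

import Mathlib

open scoped Classical
open Finset Matrix

noncomputable section

namespace SecureEst

variable {n p : ℕ}

/-- The `i`-th `n`-block of an `n`-stacked vector. -/
def blk (z : Fin p × Fin n → ℝ) (i : Fin p) : Fin n → ℝ := fun j => z (i, j)

/-- The `n`-stacked support of a stacked vector. -/
def blockSupp (z : Fin p × Fin n → ℝ) : Finset (Fin p) :=
  Finset.univ.filter fun i => blk z i ≠ 0

/-- The `n`-stacked ℓ⁰ "norm": number of nonzero blocks. -/
def l0n (z : Fin p × Fin n → ℝ) : ℕ := (blockSupp z).card

/-- `n`-stacked `q`-sparsity: membership in `Σ_qⁿ`. -/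
def Sparse (q : ℕ) (z : Fin p × Fin n → ℝ) : Prop := l0n z ≤ q

/-- Euclidean (ℓ²) norm of a real vector. -/
def enorm2 {m : Type*} [Fintype m] (x : m → ℝ) : ℝ := Real.sqrt (∑ i, x i ^ 2)

/-- `Φ_{Λⁿ}`: zero out the row-blocks of `Φ` outside `Λ`. -/
def zeroB (Λ : Finset (Fin p)) (Φ : Matrix (Fin p × Fin n) (Fin n) ℝ) :
    Matrix (Fin p × Fin n) (Fin n) ℝ :=
  fun ij k => if ij.1 ∈ Λ then Φ ij k else 0

/-- `z_{Λⁿ}`: zero out the blocks of a stacked vector outside `Λ`. -/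
def zeroV (Λ : Finset (Fin p)) (z : Fin p × Fin n → ℝ) : Fin p × Fin n → ℝ :=
  fun ij => if ij.1 ∈ Λ then z ij else 0

/-- `Φ_{Γᵢⁿ}`: the `i`-th row-block of `Φ`. -/
def rowBlk (Φ : Matrix (Fin p × Fin n) (Fin n) ℝ) (i : Fin p) :
    Matrix (Fin n) (Fin n) ℝ := fun j k => Φ (i, j) k

/-- Moore–Penrose pseudoinverse (full-column-rank formula `(MᵀM)⁻¹Mᵀ`). -/
def pinv {m k : Type*} [Fintype m] [Fintype k] [DecidableEq k]
    (M : Matrix m k ℝ) : Matrix k m ℝ := (Mᵀ * M)⁻¹ * Mᵀ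

/-- Spectral norm (largest singular value) of a real matrix. -/
def specNorm {m k : Type*} [Fintype m] [Fintype k] (M : Matrix m k ℝ) : ℝ :=
  sSup {r | ∃ x : k → ℝ, enorm2 x = 1 ∧ r = enorm2 (M.mulVec x)}

/-- Minimum singular value of a (tall) real matrix. -/
def sigmaMin {m k : Type*} [Fintype m] [Fintype k] (M : Matrix m k ℝ) : ℝ :=
  sInf {r | ∃ x : k → ℝ, enorm2 x = 1 ∧ r = enorm2 (M.mulVec x)}

/-- `(n-stacked) q`-error detectability. -/
def ErrDetectable (Φ : Matrix (Fin p × Fin n) (Fin n) ℝ) (q : ℕ) : Prop :=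
  ∀ x x' : Fin n → ℝ, ∀ e : Fin p × Fin n → ℝ,
    Sparse q e → Φ.mulVec x + e = Φ.mulVec x' → x = x'

/-- `(n-stacked) q`-error correctability. -/
def ErrCorrectable (Φ : Matrix (Fin p × Fin n) (Fin n) ℝ) (q : ℕ) : Prop :=
  ∀ x₁ x₂ : Fin n → ℝ, ∀ e₁ e₂ : Fin p × Fin n → ℝ,
    Sparse q e₁ → Sparse q e₂ →
      Φ.mulVec x₁ + e₁ = Φ.mulVec x₂ + e₂ → x₁ = x₂

/-- `(n-stacked)` cospark. -/
def cosparkN (Φ : Matrix (Fin p × Fin n) (Fin n) ℝ) : ℕ :=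
  sInf {m : ℕ | ∃ x : Fin n → ℝ, x ≠ 0 ∧ m = l0n (Φ.mulVec x)}

/-- `ρ_{p,q}(Φ)`. -/
def rho (Φ : Matrix (Fin p × Fin n) (Fin n) ℝ) (q : ℕ) : ℝ :=
  sInf {r | ∃ Λ : Finset (Fin p), Λ.card = p - q ∧ r = sigmaMin (zeroB Λ Φ)}

/-- `η_{p,q}(Φ)`. -/
def eta (Φ : Matrix (Fin p × Fin n) (Fin n) ℝ) (q : ℕ) : ℝ :=
  sSup {r | ∃ Λ : Finset (Fin p), Λ.card = p - q ∧
    ∃ i : Fin p, i ∉ Λ ∧ r = specNorm (rowBlk Φ i * pinv (zeroB Λ Φ))}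

/-- `κ^d_{p,q}(Φ)`. -/
def kappaD (Φ : Matrix (Fin p × Fin n) (Fin n) ℝ) (q : ℕ) : ℝ :=
  (Real.sqrt (p : ℝ) + 1) * Real.sqrt ((p - q : ℕ) : ℝ) / rho Φ q

/-- `κ^e_{p,q}(Φ)`. -/
def kappaE (Φ : Matrix (Fin p × Fin n) (Fin n) ℝ) (q : ℕ) : ℝ :=
  (eta Φ q * Real.sqrt ((p - q : ℕ) : ℝ) + 1) * (Real.sqrt (p : ℝ) + 1)

/-- The finite candidate set `F_{p,r}(ẑ)`. -/
def Fset (Φ : Matrix (Fin p × Fin n) (Fin n) ℝ) (r : ℕ) (z : Fin p × Fin n → ℝ) :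
    Set (Fin n → ℝ) :=
  {χ | ∃ Λ : Finset (Fin p), Λ.card = p - r ∧
    χ = (pinv (zeroB Λ Φ)).mulVec (zeroV Λ z)}

/-- `η'_{p,q,r}(Φ)`. -/
def eta' (Φ : Matrix (Fin p × Fin n) (Fin n) ℝ) (q r : ℕ) : ℝ :=
  sSup {a | ∃ Λ : Finset (Fin p), Λ.card = p - q ∧
    a = sInf {b | ∃ Λ' : Finset (Fin p), Λ' ⊆ Λ ∧ Λ'.card = p - r ∧
      b = sSup {c | ∃ i ∈ Λ \ Λ',
        c = specNorm (rowBlk Φ i * pinv (zeroB Λ' Φ))}}}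

/-- `ϑ_{p,q,r}(Φ)`. -/
def theta (Φ : Matrix (Fin p × Fin n) (Fin n) ℝ) (q r : ℕ) : ℝ :=
  max (eta' Φ q r * Real.sqrt ((p - r : ℕ) : ℝ) + 1) (Real.sqrt ((p - r : ℕ) : ℝ))

/-- `κ^c_{p,q,r}(Φ)`. -/
def kappaC (Φ : Matrix (Fin p × Fin n) (Fin n) ℝ) (q r : ℕ) : ℝ :=
  (theta Φ q r + 1) * Real.sqrt ((p - 2 * q : ℕ) : ℝ) / rho Φ (2 * q)

/-- `κ^{c'}_{p,q,r}(Φ)`. -/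
def kappaC' (Φ : Matrix (Fin p × Fin n) (Fin n) ℝ) (q r : ℕ) : ℝ :=
  (theta Φ q r - 1) / sSup {c | ∃ i : Fin p, c = specNorm (rowBlk Φ i)}

/-- Stacked observability matrix `G` with row-blocks `Gᵢ = [cᵢᵀ (cᵢA)ᵀ ⋯ (cᵢAⁿ⁻¹)ᵀ]ᵀ`. -/
def obsG (A : Matrix (Fin n) (Fin n) ℝ) (C : Matrix (Fin p) (Fin n) ℝ) :
    Matrix (Fin p × Fin n) (Fin n) ℝ :=
  fun ij k => (C * A ^ (ij.2 : ℕ)) ij.1 k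

/-- `C_Λ`: zero out the rows of `C` outside `Λ`. -/
def zeroRows (Λ : Finset (Fin p)) (C : Matrix (Fin p) (Fin n) ℝ) :
    Matrix (Fin p) (Fin n) ℝ :=
  fun i k => if i ∈ Λ then C i k else 0

/-- Observability of the pair `(A, C)`: the observability matrix has full column rank. -/
def Observable (A : Matrix (Fin n) (Fin n) ℝ) (C : Matrix (Fin p) (Fin n) ℝ) : Prop :=
  (obsG A C).rank = n

/-- `q`-redundant observability. -/
def RedObservable (A : Matrix (Fin n) (Fin n) ℝ) (C : Matrix (Fin p) (Fin n) ℝ)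
    (q : ℕ) : Prop :=
  ∀ Λ : Finset (Fin p), p - q ≤ Λ.card → Observable A (zeroRows Λ C)

/-- Euclidean norm of a complex vector. -/
def enormC {m : Type*} [Fintype m] (v : m → ℂ) : ℝ :=
  Real.sqrt (∑ i, ‖v i‖ ^ 2)

/-- The set `V(A)` of normalized complex eigenvectors of a real matrix `A`. -/
def eigSet (A : Matrix (Fin n) (Fin n) ℝ) : Set (Fin n → ℂ) :=
  {v | (∃ μ : ℂ, (A.map Complex.ofReal).mulVec v = μ • v) ∧ enormC v = 1}

/-- ℓ⁰ norm of a complex vector. -/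
def l0C (y : Fin p → ℂ) : ℕ := (Finset.univ.filter fun i => y i ≠ 0).card

/-- `n`-stacked ℓ⁰ norm of a complex stacked vector. -/
def l0nC (z : Fin p × Fin n → ℂ) : ℕ :=
  (Finset.univ.filter fun i => (fun j => z (i, j)) ≠ (0 : Fin n → ℂ)).card

/-- The dynamic security index `α_d(A, C)`. -/
def alphaD (A : Matrix (Fin n) (Fin n) ℝ) (C : Matrix (Fin p) (Fin n) ℝ) : ℕ :=
  sInf {m : ℕ | ∃ v ∈ eigSet A, m = l0C ((C.map Complex.ofReal).mulVec v)}

end SecureEst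

namespace SecureEst

section Aux
variable {m k : Type*} [Fintype m] [Fintype k]

lemma enorm_nonneg' (x : m → ℝ) : 0 ≤ enorm2 x := Real.sqrt_nonneg _

lemma enorm_eq_norm' (x : m → ℝ) : enorm2 x = ‖(WithLp.equiv 2 (m → ℝ)).symm x‖ := by
  rw [EuclideanSpace.norm_eq]; simp [enorm2, sq_abs]

lemma enorm_sq' (x : m → ℝ) : enorm2 x ^ 2 = ∑ i, x i ^ 2 :=
  Real.sq_sqrt (Finset.sum_nonneg fun i _ => sq_nonneg _)

lemma enorm_zero' : enorm2 (0 : m → ℝ) = 0 := by simp [enorm2]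

lemma enorm_eq_zero' {x : m → ℝ} (h : enorm2 x = 0) : x = 0 := by
  rw [enorm_eq_norm'] at h
  have := norm_eq_zero.mp h
  funext i; have h2 := congrArg (WithLp.equiv 2 (m → ℝ)) this; simpa using congrFun h2 i

lemma enorm_add_le' (x y : m → ℝ) : enorm2 (x + y) ≤ enorm2 x + enorm2 y := by
  simp only [enorm_eq_norm']
  exact norm_add_le _ _

lemma enorm_sub_le' (x y : m → ℝ) : enorm2 (x - y) ≤ enorm2 x + enorm2 y := by
  simp only [enorm_eq_norm']
  exact norm_sub_le _ _

lemma enorm_smul' (c : ℝ) (x : m → ℝ) : enorm2 (c • x) = |c| * enorm2 x := by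
  simp only [enorm_eq_norm']
  rw [show (WithLp.equiv 2 (m → ℝ)).symm (c • x) = c • (WithLp.equiv 2 (m → ℝ)).symm x from rfl,
    norm_smul, Real.norm_eq_abs]

lemma enorm_mulVec_le_frob (M : Matrix m k ℝ) (x : k → ℝ) :
    enorm2 (M.mulVec x) ≤ Real.sqrt (∑ i, ∑ j, M i j ^ 2) * enorm2 x := by
  rw [enorm2, enorm2, ← Real.sqrt_mul (by positivity)]
  apply Real.sqrt_le_sqrt
  rw [Finset.sum_mul]
  apply Finset.sum_le_sum
  intro i _
  calc (M.mulVec x i) ^ 2 = (∑ j, M i j * x j) ^ 2 := rfl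
    _ ≤ (∑ j, M i j ^ 2) * ∑ j, x j ^ 2 := Finset.sum_mul_sq_le_sq_mul_sq _ _ _

lemma bddAbove_spec (M : Matrix m k ℝ) :
    BddAbove {r | ∃ x : k → ℝ, enorm2 x = 1 ∧ r = enorm2 (M.mulVec x)} := by
  refine ⟨Real.sqrt (∑ i, ∑ j, M i j ^ 2), ?_⟩
  rintro c ⟨x, hx, rfl⟩
  simpa [hx] using enorm_mulVec_le_frob M x

lemma specNorm_nonneg (M : Matrix m k ℝ) : 0 ≤ specNorm M :=
  Real.sSup_nonneg (by rintro c ⟨x, hx, rfl⟩; exact enorm_nonneg' _)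

lemma bddBelow_spec (M : Matrix m k ℝ) :
    BddBelow {r | ∃ x : k → ℝ, enorm2 x = 1 ∧ r = enorm2 (M.mulVec x)} :=
  ⟨0, by rintro c ⟨x, hx, rfl⟩; exact enorm_nonneg' _⟩

lemma sigmaMin_nonneg (M : Matrix m k ℝ) : 0 ≤ sigmaMin M :=
  Real.sInf_nonneg (by rintro c ⟨x, hx, rfl⟩; exact enorm_nonneg' _)

lemma enorm_mulVec_le_specNorm (M : Matrix m k ℝ) (x : k → ℝ) :
    enorm2 (M.mulVec x) ≤ specNorm M * enorm2 x := by
  rcases eq_or_ne (enorm2 x) 0 with h | h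
  · rw [enorm_eq_zero' h, Matrix.mulVec_zero, enorm_zero']
    exact mul_nonneg (specNorm_nonneg M) (enorm_nonneg' 0)
  · have hx : 0 < enorm2 x := lt_of_le_of_ne (enorm_nonneg' x) (Ne.symm h)
    have hmem : (enorm2 x)⁻¹ * enorm2 (M.mulVec x)
        ∈ {r | ∃ y : k → ℝ, enorm2 y = 1 ∧ r = enorm2 (M.mulVec y)} := by
      refine ⟨(enorm2 x)⁻¹ • x, ?_, ?_⟩
      · rw [enorm_smul', abs_of_pos (by positivity), inv_mul_cancel₀ h]
      · rw [Matrix.mulVec_smul, enorm_smul', abs_of_pos (by positivity)]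
    have h2 := mul_le_mul_of_nonneg_left (le_csSup (bddAbove_spec M) hmem) hx.le
    rw [← mul_assoc, mul_inv_cancel₀ h, one_mul] at h2
    rw [mul_comm]
    exact h2

lemma sigmaMin_mulVec_le (M : Matrix m k ℝ) (x : k → ℝ) :
    sigmaMin M * enorm2 x ≤ enorm2 (M.mulVec x) := by
  rcases eq_or_ne (enorm2 x) 0 with h | h
  · rw [h, mul_zero]; exact enorm_nonneg' _
  · have hx : 0 < enorm2 x := lt_of_le_of_ne (enorm_nonneg' x) (Ne.symm h)
    have hmem : (enorm2 x)⁻¹ * enorm2 (M.mulVec x)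
        ∈ {r | ∃ y : k → ℝ, enorm2 y = 1 ∧ r = enorm2 (M.mulVec y)} := by
      refine ⟨(enorm2 x)⁻¹ • x, ?_, ?_⟩
      · rw [enorm_smul', abs_of_pos (by positivity), inv_mul_cancel₀ h]
      · rw [Matrix.mulVec_smul, enorm_smul', abs_of_pos (by positivity)]
    have h2 := mul_le_mul_of_nonneg_left (csInf_le (bddBelow_spec M) hmem) hx.le
    rw [← mul_assoc, mul_inv_cancel₀ h, one_mul] at h2
    rw [mul_comm]
    exact h2

lemma enorm_continuous : Continuous (enorm2 : (m → ℝ) → ℝ) :=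
  Real.continuous_sqrt.comp (continuous_finset_sum _ fun i _ => (continuous_apply i).pow 2)

lemma sphere_compact : IsCompact {x : k → ℝ | enorm2 x = 1} := by
  have h1 : {x : k → ℝ | enorm2 x = 1}
      = (WithLp.equiv 2 (k → ℝ)) '' (Metric.sphere (0 : EuclideanSpace ℝ k) 1) := by
    ext x
    simp only [Set.mem_image, Metric.mem_sphere, Set.mem_setOf_eq, dist_zero_right]
    constructor
    · intro hx
      exact ⟨(WithLp.equiv 2 (k → ℝ)).symm x, by rw [enorm_eq_norm'] at hx; exact hx,
        (WithLp.equiv 2 (k → ℝ)).apply_symm_apply x⟩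
    · rintro ⟨y, hy, rfl⟩
      rw [enorm_eq_norm', Equiv.symm_apply_apply]
      exact hy
  rw [h1]
  exact (isCompact_sphere _ _).image (PiLp.continuous_ofLp ..)

lemma sphere_nonempty [Nonempty k] : ({x : k → ℝ | enorm2 x = 1} : Set (k → ℝ)).Nonempty := by
  have h1 : (∑ i, (Pi.single (Classical.arbitrary k) (1 : ℝ)) i ^ 2) = (1 : ℝ) := by
    simp [Pi.single_apply, ite_pow]
  have h2 : enorm2 (Pi.single (Classical.arbitrary k) (1 : ℝ)) = 1 := by
    unfold enorm2; rw [h1, Real.sqrt_one]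
  exact ⟨Pi.single (Classical.arbitrary k) (1 : ℝ), h2⟩

lemma sigmaMin_pos [Nonempty k] [DecidableEq k] (M : Matrix m k ℝ)
    (hinj : Function.Injective M.mulVec) : 0 < sigmaMin M := by
  have hfc : Continuous fun x : k → ℝ => enorm2 (M.mulVec x) := by
    have h1 : Continuous fun x : k → ℝ => M.mulVec x := by
      have := LinearMap.continuous_of_finiteDimensional (M.mulVecLin)
      exact this
    exact enorm_continuous.comp h1
  obtain ⟨x₀, hx₀S, hmin⟩ := sphere_compact.exists_isMinOn sphere_nonempty hfc.continuousOn
  have hx0ne : x₀ ≠ 0 := by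
    intro h0
    rw [Set.mem_setOf_eq, h0, enorm_zero'] at hx₀S
    exact zero_ne_one hx₀S
  have hMx : M.mulVec x₀ ≠ 0 := by
    intro h0
    exact hx0ne (hinj (by rw [h0, Matrix.mulVec_zero]))
  have hpos : 0 < enorm2 (M.mulVec x₀) :=
    lt_of_le_of_ne (enorm_nonneg' _) (fun h => hMx (enorm_eq_zero' h.symm))
  have hne : {r | ∃ x : k → ℝ, enorm2 x = 1 ∧ r = enorm2 (M.mulVec x)}.Nonempty :=
    ⟨enorm2 (M.mulVec x₀), x₀, hx₀S, rfl⟩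
  have hle : enorm2 (M.mulVec x₀) ≤ sigmaMin M :=
    le_csInf hne (by rintro c ⟨x, hx, rfl⟩; exact isMinOn_iff.mp hmin x hx)
  exact lt_of_lt_of_le hpos hle

lemma pinv_left_inv [DecidableEq k] (M : Matrix m k ℝ)
    (hinj : Function.Injective M.mulVec) : pinv M * M = 1 := by
  have hker : ∀ z : k → ℝ, (Mᵀ * M).mulVec z = 0 → z = 0 := by
    intro z hz
    have h1 : M.mulVec z ⬝ᵥ M.mulVec z = 0 := by
      calc M.mulVec z ⬝ᵥ M.mulVec z = (z ᵥ* Mᵀ) ⬝ᵥ M.mulVec z := by rw [Matrix.vecMul_transpose]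
        _ = z ⬝ᵥ Mᵀ.mulVec (M.mulVec z) := (Matrix.dotProduct_mulVec z Mᵀ (M.mulVec z)).symm
        _ = z ⬝ᵥ (Mᵀ * M).mulVec z := by rw [Matrix.mulVec_mulVec]
        _ = 0 := by rw [hz, dotProduct_zero]
    have h2 : M.mulVec z = 0 := dotProduct_self_eq_zero.mp h1
    exact hinj (by rw [h2, Matrix.mulVec_zero])
  have hu : IsUnit (Mᵀ * M) := by
    rw [← Matrix.mulVec_injective_iff_isUnit]
    intro a b hab
    have h3 : (Mᵀ * M).mulVec (a - b) = 0 := by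
      rw [Matrix.mulVec_sub, hab, sub_self]
    exact sub_eq_zero.mp (hker _ h3)
  rw [pinv, Matrix.mul_assoc]
  exact Matrix.nonsing_inv_mul _ ((Matrix.isUnit_iff_isUnit_det _).mp hu)

end Aux

section Blocks
variable {n p : ℕ}

lemma sum_sq_blocks (z : Fin p × Fin n → ℝ) :
    ∑ ij : Fin p × Fin n, z ij ^ 2 = ∑ i, enorm2 (blk z i) ^ 2 := by
  rw [Fintype.sum_prod_type]
  refine Finset.sum_congr rfl fun i _ => ?_
  rw [enorm_sq']
  rfl

lemma eta_nonneg (Φ : Matrix (Fin p × Fin n) (Fin n) ℝ) (q : ℕ) : 0 ≤ eta Φ q :=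
  Real.sSup_nonneg (by rintro c ⟨Λ, hΛ, i, hi, rfl⟩; exact specNorm_nonneg _)

lemma rho_nonneg (Φ : Matrix (Fin p × Fin n) (Fin n) ℝ) (q : ℕ) : 0 ≤ rho Φ q :=
  Real.sInf_nonneg (by rintro c ⟨Λ, hΛ, rfl⟩; exact sigmaMin_nonneg _)

lemma kappaE_nonneg (Φ : Matrix (Fin p × Fin n) (Fin n) ℝ) (q : ℕ) : 0 ≤ kappaE Φ q :=
  mul_nonneg
    (add_nonneg (mul_nonneg (eta_nonneg Φ q) (Real.sqrt_nonneg _)) zero_le_one)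
    (add_nonneg (Real.sqrt_nonneg _) zero_le_one)

lemma kappaD_nonneg (Φ : Matrix (Fin p × Fin n) (Fin n) ℝ) (q : ℕ) : 0 ≤ kappaD Φ q :=
  div_nonneg
    (mul_nonneg (add_nonneg (Real.sqrt_nonneg _) zero_le_one) (Real.sqrt_nonneg _))
    (rho_nonneg Φ q)

end Blocks

end SecureEst
open SecureEst in
/-- Theorem 1.(ii): with `zhat = Φx + v + e`, `xhat = Φ†zhat`, `r = zhat − Φxhat`,
if every residual block satisfies `‖rᵢ‖₂ ≤ √p · v_max`, then every error block satisfies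
`‖eᵢ‖₂ ≤ κ^e_{p,q}(Φ) v_max`, and `‖xhat − x‖₂ ≤ κ^d_{p,q}(Φ) v_max`. -/
theorem residual_detection_noisy_bound {n p : ℕ}
    (Φ : Matrix (Fin p × Fin n) (Fin n) ℝ) (q : ℕ)
    (hdet : ErrDetectable Φ q)
    (x : Fin n → ℝ) (e v : Fin p × Fin n → ℝ) (vmax : ℝ)
    (he : Sparse q e) (hv : ∀ i : Fin p, enorm2 (blk v i) ≤ vmax)
    (zhat : Fin p × Fin n → ℝ) (xhat : Fin n → ℝ) (r : Fin p × Fin n → ℝ)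
    (hz : zhat = Φ.mulVec x + v + e)
    (hxhat : xhat = (pinv Φ).mulVec zhat)
    (hr : r = zhat - Φ.mulVec xhat)
    (hres : ∀ i : Fin p, enorm2 (blk r i) ≤ Real.sqrt (p : ℝ) * vmax) :
    (∀ i : Fin p, enorm2 (blk e i) ≤ kappaE Φ q * vmax) ∧
      enorm2 (xhat - x) ≤ kappaD Φ q * vmax := by
  have hEnn : 0 ≤ kappaE Φ q := kappaE_nonneg Φ q
  have hDnn : 0 ≤ kappaD Φ q := kappaD_nonneg Φ q
  rcases Nat.eq_zero_or_pos p with hp | hp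
  · -- degenerate case p = 0
    subst hp
    constructor
    · intro i; exact i.elim0
    · have hbs : blockSupp (0 : Fin 0 × Fin n → ℝ) = ∅ := by
        ext i; exact i.elim0
      have hsp : Sparse q (0 : Fin 0 × Fin n → ℝ) := by
        show l0n (0 : Fin 0 × Fin n → ℝ) ≤ q
        rw [l0n, hbs]; simp
      have hxx : xhat = x :=
        hdet xhat x 0 hsp (by funext ij; exact ij.1.elim0)
      have hKD : kappaD Φ q = 0 := by
        simp [kappaD]
      rw [hxx, sub_self, hKD, zero_mul, enorm_zero']
  rcases Nat.eq_zero_or_pos n with hn | hn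
  · -- degenerate case n = 0
    subst hn
    have hv0 : 0 ≤ vmax := le_trans (enorm_nonneg' _) (hv ⟨0, hp⟩)
    constructor
    · intro i
      have h0 : enorm2 (blk e i) = 0 := by simp [enorm2]
      rw [h0]; exact mul_nonneg hEnn hv0
    · have h0 : enorm2 (xhat - x) = 0 := by simp [enorm2]
      rw [h0]; exact mul_nonneg hDnn hv0
  -- main case
  have hv0 : 0 ≤ vmax := le_trans (enorm_nonneg' _) (hv ⟨0, hp⟩)
  haveI : Nonempty (Fin n) := ⟨⟨0, hn⟩⟩
  set d : Fin n → ℝ := xhat - x with hd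
  have hkey : ∀ ij : Fin p × Fin n, e ij = r ij - v ij + Φ.mulVec d ij := by
    intro ij
    have hdm : Φ.mulVec d ij = Φ.mulVec xhat ij - Φ.mulVec x ij := by
      rw [hd, Matrix.mulVec_sub]; rfl
    rw [hr, hz]
    simp only [Pi.sub_apply, Pi.add_apply]
    rw [hdm]; ring
  have hinj : ∀ Λ : Finset (Fin p), Λ.card = p - q →
      Function.Injective (zeroB Λ Φ).mulVec := by
    intro Λ hcard
    have hker : ∀ z : Fin n → ℝ, (zeroB Λ Φ).mulVec z = 0 → z = 0 := by
      intro z hz0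
      have hsp : Sparse q (Φ.mulVec z) := by
        have hsub : blockSupp (Φ.mulVec z) ⊆ univ \ Λ := by
          intro i hi
          rw [mem_sdiff]
          refine ⟨mem_univ i, fun hiΛ => ?_⟩
          rw [blockSupp, mem_filter] at hi
          apply hi.2
          funext j
          have hc := congrFun hz0 (i, j)
          simpa [zeroB, Matrix.mulVec, dotProduct, hiΛ, blk] using hc
        calc l0n (Φ.mulVec z) ≤ (univ \ Λ).card := Finset.card_le_card hsub
          _ = p - Λ.card := by rw [Finset.card_univ_diff, Fintype.card_fin]
          _ ≤ q := by omega
      exact (hdet 0 z (Φ.mulVec z) hsp (by rw [Matrix.mulVec_zero, zero_add])).symm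
    intro a b hab
    have h3 : (zeroB Λ Φ).mulVec (a - b) = 0 := by rw [Matrix.mulVec_sub, hab, sub_self]
    exact sub_eq_zero.mp (hker _ h3)
  have hcardS : (blockSupp e).card ≤ q := he
  obtain ⟨Λ, hΛsub, hΛcard⟩ := Finset.exists_subset_card_eq
    (show p - q ≤ (univ \ blockSupp e).card by
      rw [Finset.card_univ_diff, Fintype.card_fin]; omega)
  set M := zeroB Λ Φ with hM
  have hMinj := hinj Λ hΛcard
  have he0 : ∀ i ∈ Λ, blk e i = 0 := by
    intro i hi
    have hmem := hΛsub hi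
    rw [mem_sdiff] at hmem
    by_contra hne
    exact hmem.2 (by rw [blockSupp, mem_filter]; exact ⟨mem_univ i, hne⟩)
  set w := M.mulVec d with hwdef
  have hwij : ∀ ij : Fin p × Fin n, w ij = if ij.1 ∈ Λ then v ij - r ij else 0 := by
    rintro ⟨i, j⟩
    have h1 : w (i, j) = if i ∈ Λ then Φ.mulVec d (i, j) else 0 := by
      simp only [hwdef, hM, Matrix.mulVec, dotProduct, zeroB]
      by_cases h : i ∈ Λ <;> simp [h]
    rw [h1]
    by_cases h : i ∈ Λ
    · have he' : e (i, j) = 0 := by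
        have hb := he0 i h
        have : blk e i j = 0 := by rw [hb]; rfl
        exact this
      rw [if_pos h, if_pos h]
      have hk := hkey (i, j)
      rw [he'] at hk
      linarith
    · rw [if_neg h, if_neg h]
  have hbound : ∀ i, enorm2 (blk w i) ^ 2
      ≤ if i ∈ Λ then ((Real.sqrt p + 1) * vmax) ^ 2 else 0 := by
    intro i
    by_cases h : i ∈ Λ
    · rw [if_pos h]
      have hblk : blk w i = blk v i - blk r i := by
        funext j
        show w (i, j) = blk v i j - blk r i j
        rw [hwij (i, j), if_pos h]; rfl
      have h1 : enorm2 (blk w i) ≤ (Real.sqrt p + 1) * vmax := by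
        rw [hblk]
        calc enorm2 (blk v i - blk r i) ≤ enorm2 (blk v i) + enorm2 (blk r i) := enorm_sub_le' _ _
          _ ≤ vmax + Real.sqrt p * vmax := add_le_add (hv i) (hres i)
          _ = (Real.sqrt p + 1) * vmax := by ring
      exact pow_le_pow_left₀ (enorm_nonneg' _) h1 2
    · rw [if_neg h]
      have hblk : blk w i = 0 := by
        funext j
        show w (i, j) = 0
        rw [hwij (i, j), if_neg h]
      rw [hblk, enorm_zero']
      norm_num
  have hwnorm : enorm2 w ≤ Real.sqrt ((p - q : ℕ) : ℝ) * ((Real.sqrt p + 1) * vmax) := by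
    have hB : (0 : ℝ) ≤ (Real.sqrt p + 1) * vmax :=
      mul_nonneg (by positivity) hv0
    have h2 : enorm2 w ^ 2 ≤ ((p - q : ℕ) : ℝ) * ((Real.sqrt p + 1) * vmax) ^ 2 := by
      rw [enorm_sq']
      calc ∑ ij : Fin p × Fin n, w ij ^ 2 = ∑ i, enorm2 (blk w i) ^ 2 := sum_sq_blocks w
        _ ≤ ∑ i, (if i ∈ Λ then ((Real.sqrt p + 1) * vmax) ^ 2 else 0) :=
            Finset.sum_le_sum fun i _ => hbound i
        _ = Λ.card * ((Real.sqrt p + 1) * vmax) ^ 2 := by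
            rw [Finset.sum_ite_mem, Finset.univ_inter, Finset.sum_const, nsmul_eq_mul]
        _ = ((p - q : ℕ) : ℝ) * ((Real.sqrt p + 1) * vmax) ^ 2 := by rw [hΛcard]
    calc enorm2 w = Real.sqrt (enorm2 w ^ 2) := (Real.sqrt_sq (enorm_nonneg' w)).symm
      _ ≤ Real.sqrt (((p - q : ℕ) : ℝ) * ((Real.sqrt p + 1) * vmax) ^ 2) := Real.sqrt_le_sqrt h2
      _ = Real.sqrt ((p - q : ℕ) : ℝ) * ((Real.sqrt p + 1) * vmax) := by
          rw [Real.sqrt_mul (by positivity), Real.sqrt_sq hB]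
  have hrho_le : rho Φ q ≤ sigmaMin M :=
    csInf_le ⟨0, by rintro c ⟨Λ', h', rfl⟩; exact sigmaMin_nonneg _⟩ ⟨Λ, hΛcard, rfl⟩
  have hrho_pos : 0 < rho Φ q := by
    have hfin : {c | ∃ Λ' : Finset (Fin p), Λ'.card = p - q ∧
        c = sigmaMin (zeroB Λ' Φ)}.Finite := by
      apply Set.Finite.subset
        (Set.finite_range fun Λ' : Finset (Fin p) => sigmaMin (zeroB Λ' Φ))
      rintro c ⟨Λ', _, rfl⟩
      exact ⟨Λ', rfl⟩
    have hne : {c | ∃ Λ' : Finset (Fin p), Λ'.card = p - q ∧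
        c = sigmaMin (zeroB Λ' Φ)}.Nonempty := ⟨sigmaMin M, Λ, hΛcard, rfl⟩
    obtain ⟨Λ', hΛ'card, hval⟩ := hne.csInf_mem hfin
    show 0 < rho Φ q
    rw [rho, hval]
    exact sigmaMin_pos _ (hinj Λ' hΛ'card)
  constructor
  · -- error block bound
    intro i
    by_cases hei : blk e i = 0
    · rw [hei, enorm_zero']
      exact mul_nonneg hEnn hv0
    · have hiS : i ∈ blockSupp e := by rw [blockSupp, mem_filter]; exact ⟨mem_univ i, hei⟩
      have hiΛ : i ∉ Λ := fun hmem => (mem_sdiff.mp (hΛsub hmem)).2 hiS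
      have hd2 : d = (pinv M).mulVec w := by
        have hPL := pinv_left_inv M hMinj
        calc d = (1 : Matrix (Fin n) (Fin n) ℝ).mulVec d := (Matrix.one_mulVec d).symm
          _ = (pinv M * M).mulVec d := by rw [hPL]
          _ = (pinv M).mulVec w := by rw [← Matrix.mulVec_mulVec, hwdef]
      have hblk : blk e i = blk r i - blk v i + (rowBlk Φ i).mulVec d := by
        funext j
        show e (i, j) = blk r i j - blk v i j + (rowBlk Φ i).mulVec d j
        rw [hkey (i, j)]
        rfl
      have hb2 : enorm2 (blk r i - blk v i) ≤ Real.sqrt p * vmax + vmax :=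
        le_trans (enorm_sub_le' _ _) (add_le_add (hres i) (hv i))
      have hb3 : (rowBlk Φ i).mulVec d = (rowBlk Φ i * pinv M).mulVec w := by
        rw [hd2, Matrix.mulVec_mulVec]
      have hb5 : specNorm (rowBlk Φ i * pinv M) ≤ eta Φ q := by
        apply le_csSup
        · apply Set.Finite.bddAbove
          apply Set.Finite.subset (Set.finite_range fun y : Finset (Fin p) × Fin p =>
            specNorm (rowBlk Φ y.2 * pinv (zeroB y.1 Φ)))
          rintro c ⟨Λ', _, i', _, rfl⟩
          exact ⟨(Λ', i'), rfl⟩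
        · exact ⟨Λ, hΛcard, i, hiΛ, rfl⟩
      have hb6 : enorm2 ((rowBlk Φ i).mulVec d)
          ≤ eta Φ q * (Real.sqrt ((p - q : ℕ) : ℝ) * ((Real.sqrt p + 1) * vmax)) := by
        rw [hb3]
        calc enorm2 ((rowBlk Φ i * pinv M).mulVec w)
            ≤ specNorm (rowBlk Φ i * pinv M) * enorm2 w := enorm_mulVec_le_specNorm _ _
          _ ≤ eta Φ q * (Real.sqrt ((p - q : ℕ) : ℝ) * ((Real.sqrt p + 1) * vmax)) :=
              mul_le_mul hb5 hwnorm (enorm_nonneg' w) (eta_nonneg Φ q)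
      calc enorm2 (blk e i)
          ≤ enorm2 (blk r i - blk v i) + enorm2 ((rowBlk Φ i).mulVec d) := by
            rw [hblk]; exact enorm_add_le' _ _
        _ ≤ (Real.sqrt p * vmax + vmax)
            + eta Φ q * (Real.sqrt ((p - q : ℕ) : ℝ) * ((Real.sqrt p + 1) * vmax)) :=
            add_le_add hb2 hb6
        _ = kappaE Φ q * vmax := by rw [kappaE]; ring
  · -- state estimate bound
    have h1 : rho Φ q * enorm2 d ≤ enorm2 w :=
      le_trans (mul_le_mul_of_nonneg_right hrho_le (enorm_nonneg' d))
        (sigmaMin_mulVec_le M d)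
    show enorm2 d ≤ kappaD Φ q * vmax
    rw [kappaD, div_mul_eq_mul_div, le_div_iff₀ hrho_pos]
    calc enorm2 d * rho Φ q = rho Φ q * enorm2 d := mul_comm _ _
      _ ≤ enorm2 w := h1
      _ ≤ Real.sqrt ((p - q : ℕ) : ℝ) * ((Real.sqrt p + 1) * vmax) := hwnorm
      _ = (Real.sqrt p + 1) * Real.sqrt ((p - q : ℕ) : ℝ) * vmax := by ring
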